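/- Let a monoid V act on an additive commutative monoid H, where H is idempotent, the insertion property holds, and the EF-identity v • h + h = v • h holds for all v : V and h : H. If v₁ • h₁ = h and v₂ • h₂ = h for some v₁, v₂ : V and h₁, h₂, h : H, then there exists u : V with u • (h₁ + h₂) = h. (Hence the set {g : H | ∃ v, v • g = h}, together with the absorbing element, is closed under addition.) -/
import Mathlib

/-- In an EF-algebra (idempotent commutative horizontal monoid, insertion
property, EF-identity), if `h` is reachable from both `h₁` and `h₂`, then `h`
is reachable from `h₁ + h₂`. -/
theorem reachable_closed_under_add {V H : Type*} [Monoid V] [AddCommMonoid H]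
    [MulAction V H]
    (idem : ∀ h : H, h + h = h)
    (ins : ∀ h : H, ∃ c : V, ∀ g : H, c • g = g + h)
    (ef : ∀ (v : V) (h : H), v • h + h = v • h)
    (v₁ v₂ : V) (h₁ h₂ h : H)
    (hv₁ : v₁ • h₁ = h) (hv₂ : v₂ • h₂ = h) :
    ∃ u : V, u • (h₁ + h₂) = h := by
  have e1 : h + h₁ = h := by rw [← hv₁]; exact ef v₁ h₁
  have e2 : h + h₂ = h := by rw [← hv₂]; exact ef v₂ h₂
  obtain ⟨c, hc⟩ := ins h
  refine ⟨c, ?_⟩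
  rw [hc]
  calc h₁ + h₂ + h = h + h₁ + h₂ := by ac_rfl
    _ = h := by rw [e1, e2]
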